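/- Let n ≥ 2, let ε ∈ {−1,1}ⁿ and let 1 ≤ i ≤ n, and set H_{ε,i} = H_ε ∩ Lᵢ. If a hyperplane of the arrangement 𝓗ₙ contains H_{ε,i}, then it equals Lᵢ, H_ε, or H_{g⁽ⁱ⁾(ε)}. -/

import Mathlib

open scoped BigOperators

/-- The affine hyperplane `H_ε = {x ∈ ℝⁿ : ∑ εᵢ xᵢ = 1}`. -/
def Hplane (n : ℕ) (ε : Fin n → ℝ) : Set (Fin n → ℝ) := {x | ∑ i, ε i * x i = 1}

/-- The coordinate hyperplane `Lᵢ = {x ∈ ℝⁿ : xᵢ = 0}`. -/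
def Lplane (n : ℕ) (i : Fin n) : Set (Fin n → ℝ) := {x | x i = 0}

/-- The `F_C`-arrangement `𝓗ₙ`. -/
def FCarrangement (n : ℕ) : Set (Set (Fin n → ℝ)) :=
  {S | (∃ ε : Fin n → ℝ, (∀ i, ε i = 1 ∨ ε i = -1) ∧ S = Hplane n ε) ∨
    ∃ i : Fin n, S = Lplane n i}

lemma sum_single (n : ℕ) (δ : Fin n → ℝ) (j : Fin n) (c : ℝ) :
    ∑ k, δ k * (if k = j then c else 0) = δ j * c := by
  rw [Finset.sum_eq_single j]
  · simp
  · intro b _ hb; simp [hb]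
  · simp

/-- For `ε ∈ {-1,1}ⁿ` and `1 ≤ i ≤ n`, any hyperplane of the arrangement
`𝓗ₙ` containing `H_{ε,i} = H_ε ∩ Lᵢ` equals `Lᵢ`, `H_ε`, or `H_{g⁽ⁱ⁾(ε)}` where `g⁽ⁱ⁾`
flips the sign at position `i`. -/
theorem hyperplane_containing_mixed_intersection (n : ℕ) (hn : 2 ≤ n)
    (ε : Fin n → ℝ) (hε : ∀ i, ε i = 1 ∨ ε i = -1) (i : Fin n)
    (S : Set (Fin n → ℝ)) (hS : S ∈ FCarrangement n)
    (hsub : Hplane n ε ∩ Lplane n i ⊆ S) :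
    S = Lplane n i ∨ S = Hplane n ε ∨ S = Hplane n (Function.update ε i (-ε i)) := by
  have key : ∀ j : Fin n, j ≠ i →
      (fun k => if k = j then ε j else 0) ∈ Hplane n ε ∩ Lplane n i := by
    intro j hj
    constructor
    · show ∑ k, ε k * _ = 1
      rw [sum_single]
      rcases hε j with h | h <;> rw [h] <;> norm_num
    · show (if i = j then ε j else 0) = 0
      simp [Ne.symm hj]
  rcases hS with ⟨δ, hδ, rfl⟩ | ⟨j, rfl⟩
  · have hagree : ∀ j, j ≠ i → δ j = ε j := by
      intro j hj
      have hx := hsub (key j hj)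
      simp only [Hplane, Set.mem_setOf_eq] at hx
      rw [sum_single] at hx
      rcases hδ j with h | h <;> rcases hε j with h' | h' <;>
        rw [h, h'] at hx ⊢ <;> norm_num at hx
    by_cases hdi : δ i = ε i
    · have hde : δ = ε := by
        funext k
        by_cases hk : k = i
        · subst hk; exact hdi
        · exact hagree k hk
      right; left; rw [hde]
    · have hde : δ = Function.update ε i (-ε i) := by
        funext k
        by_cases hk : k = i
        · subst hk
          rw [Function.update_self]
          rcases hδ k with h | h <;> rcases hε k with h' | h' <;>
            first
              | exact absurd (h.trans h'.symm) hdi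
              | (rw [h, h']; try norm_num)
        · rw [Function.update_of_ne hk]; exact hagree k hk
      right; right; rw [hde]
  · by_cases hj : j = i
    · left; rw [hj]
    · exfalso
      have hx := hsub (key j hj)
      simp only [Lplane, Set.mem_setOf_eq, if_pos rfl] at hx
      rcases hε j with h | h <;> rw [h] at hx <;> norm_num at hx
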